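/- For all u, w in the Coxeter group W, the element σ(u) left-divides σ(w) in the Artin–Tits monoid M if and only if u ≤ w in the right weak order on W; and σ(u) right-divides σ(w) in M if and only if u is a suffix of w. -/

import Mathlib

section ArtinDefs

variable {S : Type*}

/-- The alternating word `sts⋯` with `k` factors, in the free monoid on `S`. -/
def altWord (s t : S) : ℕ → FreeMonoid S
  | 0 => 1
  | n + 1 => FreeMonoid.of s * altWord t s n

/-- Braid relations determined by a Coxeter matrix: for `s ≠ t` with `m s t` finite
(recall that in `CoxeterMatrix`, the entry `0` encodes `∞`), the two alternating words
with `m s t` factors are related. -/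
def braidRel (Mmat : CoxeterMatrix S) : FreeMonoid S → FreeMonoid S → Prop :=
  fun a b => ∃ s t : S, s ≠ t ∧ Mmat s t ≠ 0 ∧
    a = altWord s t (Mmat s t) ∧ b = altWord t s (Mmat s t)

/-- The Artin–Tits monoid associated with a Coxeter matrix: the monoid presented by
generators `S` and the braid relations. -/
abbrev ArtinTitsMonoid (Mmat : CoxeterMatrix S) : Type _ :=
  (conGen (braidRel Mmat)).Quotient

/-- The images of the generators in the Artin–Tits monoid. -/
def atGen (Mmat : CoxeterMatrix S) (s : S) : ArtinTitsMonoid Mmat :=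
  (Con.mk' (conGen (braidRel Mmat))) (FreeMonoid.of s)

/-- `f` right-divides `g`.  (Note: `f ∣ g` is left-divisibility, `∃ h, g = f * h`.) -/
def MonRightDvd {M : Type*} [Monoid M] (f g : M) : Prop := ∃ h, g = h * f

/-- `h` is a right-lcm of `f` and `g`: a least common right-multiple with respect to
left-divisibility. -/
def IsRightLcm {M : Type*} [Monoid M] (f g h : M) : Prop :=
  f ∣ h ∧ g ∣ h ∧ ∀ k, f ∣ k → g ∣ k → h ∣ k

/-- An atom of a monoid: an element `g ≠ 1` whose only left-divisors are `1` and `g`. -/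
def IsAtomElem {M : Type*} [Monoid M] (g : M) : Prop :=
  g ≠ 1 ∧ ∀ f, f ∣ g → f = 1 ∨ f = g

/-- `F` is closed under right-lcm: the right-lcm of two elements of `F` belongs to `F`
when it exists. -/
def ClosedRightLcm {M : Type*} [Monoid M] (F : Set M) : Prop :=
  ∀ f ∈ F, ∀ g ∈ F, ∀ h, IsRightLcm f g h → h ∈ F

/-- `F` is closed under right-divisor. -/
def ClosedRightDvd {M : Type*} [Monoid M] (F : Set M) : Prop :=
  ∀ g ∈ F, ∀ f, MonRightDvd f g → f ∈ F

/-- The closure of a subset of a monoid under right-lcm and right-divisor: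
the smallest family containing `base` and closed under right-lcm (when it exists)
and under right-divisor. -/
inductive LcmDvdClosure {M : Type*} [Monoid M] (base : Set M) : M → Prop
  | base {g : M} : g ∈ base → LcmDvdClosure base g
  | lcm {f g h : M} : LcmDvdClosure base f → LcmDvdClosure base g →
      IsRightLcm f g h → LcmDvdClosure base h
  | rdvd {f g : M} : LcmDvdClosure base g → MonRightDvd f g → LcmDvdClosure base f

/-- A Garside family in a monoid `M`: a set `F` containing `1` such that every element
of `M` admits an `F`-normal decomposition. -/
def IsGarsideFamily {M : Type*} [Monoid M] (F : Set M) : Prop :=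
  (1 : M) ∈ F ∧ ∀ g : M, ∃ l : List M, (∀ x ∈ l, x ∈ F) ∧ l.prod = g ∧
    ∀ i : ℕ, i + 1 < l.length → ∀ s ∈ F, ∀ f : M,
      s ∣ f * l.getD i 1 * l.getD (i + 1) 1 → s ∣ f * l.getD i 1

end ArtinDefs

section CoxeterDefs

variable {S : Type*} {W : Type*} [Group W]

/-- The right weak order on `W`: `u ≤ w` iff `w = u * v` with `ℓ(w) = ℓ(u) + ℓ(v)`. -/
def WeakLE {Mmat : CoxeterMatrix S} (cs : CoxeterSystem Mmat W) (u w : W) : Prop :=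
  ∃ v : W, w = u * v ∧ cs.length w = cs.length u + cs.length v

/-- `u` is a suffix of `w`: `w = v * u` with `ℓ(w) = ℓ(v) + ℓ(u)`. -/
def IsSuffixOf {Mmat : CoxeterMatrix S} (cs : CoxeterSystem Mmat W) (u w : W) : Prop :=
  ∃ v : W, w = v * u ∧ cs.length w = cs.length v + cs.length u

/-- `j` is the join (least upper bound) of `u` and `v` in the right weak order. -/
def IsJoin {Mmat : CoxeterMatrix S} (cs : CoxeterSystem Mmat W) (u v j : W) : Prop :=
  WeakLE cs u j ∧ WeakLE cs v j ∧ ∀ k : W, WeakLE cs u k → WeakLE cs v k → WeakLE cs j k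

end CoxeterDefs

section Aux

variable {S : Type*} {W : Type*} [Group W]

theorem altWord_toList (s t : S) (m : ℕ) :
    FreeMonoid.toList (altWord s t m) =
      if Even m then CoxeterSystem.alternatingWord s t m
      else CoxeterSystem.alternatingWord t s m := by
  induction m generalizing s t with
  | zero => simp [altWord, CoxeterSystem.alternatingWord]
  | succ n ih =>
    rw [altWord]
    rcases Nat.even_or_odd n with h | h
    · have h1 : ¬ Even (n + 1) := by simp [Nat.even_add_one, h]
      rw [if_neg h1, CoxeterSystem.alternatingWord_succ', if_pos h]
      simp only [FreeMonoid.toList_mul, ih, if_pos h]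
      rfl
    · have h1 : Even (n + 1) := by simp [Nat.even_add_one, Nat.not_even_iff_odd, h]
      rw [if_pos h1, CoxeterSystem.alternatingWord_succ',
        if_neg (Nat.not_even_iff_odd.2 h)]
      simp only [FreeMonoid.toList_mul, ih, if_neg (Nat.not_even_iff_odd.2 h)]
      rfl

theorem altWord_length (s t : S) (m : ℕ) : (altWord s t m).length = m := by
  induction m generalizing s t with
  | zero => rfl
  | succ n ih =>
    rw [altWord, FreeMonoid.length_mul, FreeMonoid.length_of, ih]
    omega

/-- The length homomorphism on the free monoid. -/
def lenHom : FreeMonoid S →* Multiplicative ℕ where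
  toFun x := Multiplicative.ofAdd x.length
  map_one' := rfl
  map_mul' a b := by
    simp [FreeMonoid.length_mul, ofAdd_add]

/-- The length homomorphism on the Artin–Tits monoid. -/
def atLen (Mmat : CoxeterMatrix S) : ArtinTitsMonoid Mmat →* Multiplicative ℕ :=
  Con.lift _ lenHom (by
    refine (Con.conGen_le).2 ?_
    rintro a b ⟨s, t, -, -, rfl, rfl⟩
    rw [Con.ker_rel]
    show Multiplicative.ofAdd _ = Multiplicative.ofAdd _
    rw [altWord_length, altWord_length])

/-- The projection from the Artin–Tits monoid to the Coxeter group. -/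
def atProj {Mmat : CoxeterMatrix S} (cs : CoxeterSystem Mmat W) :
    ArtinTitsMonoid Mmat →* W :=
  Con.lift _ (FreeMonoid.lift cs.simple) (by
    refine (Con.conGen_le).2 ?_
    rintro a b ⟨s, t, -, -, rfl, rfl⟩
    rw [Con.ker_rel]
    rw [FreeMonoid.lift_apply, FreeMonoid.lift_apply, altWord_toList, altWord_toList]
    have key : ∀ a b : S, Mmat a b = Mmat s t →
        ((CoxeterSystem.alternatingWord a b (Mmat s t)).map cs.simple).prod =
        ((CoxeterSystem.alternatingWord b a (Mmat s t)).map cs.simple).prod := by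
      intro a b hab
      have := cs.prod_alternatingWord_eq_prod_alternatingWord_sub a b (Mmat s t)
        (by rw [hab]; omega)
      rw [CoxeterSystem.wordProd, CoxeterSystem.wordProd] at this
      rw [this]
      have h2 : Mmat a b * 2 - Mmat s t = Mmat s t := by rw [hab]; omega
      rw [h2]
    rcases Nat.even_or_odd (Mmat s t) with h | h
    · simp only [if_pos h]
      exact key s t rfl
    · simp only [if_neg (Nat.not_even_iff_odd.2 h)]
      exact key t s (Mmat.symmetric t s))

theorem atLen_mk (Mmat : CoxeterMatrix S) (x : FreeMonoid S) :
    atLen Mmat (Con.mk' _ x) = Multiplicative.ofAdd x.length := rfl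

theorem atProj_mk {Mmat : CoxeterMatrix S} (cs : CoxeterSystem Mmat W) (x : FreeMonoid S) :
    atProj cs (Con.mk' _ x) = cs.wordProd x.toList := by
  show FreeMonoid.lift cs.simple x = _
  rw [FreeMonoid.lift_apply, CoxeterSystem.wordProd]

theorem length_atProj_le {Mmat : CoxeterMatrix S} (cs : CoxeterSystem Mmat W)
    (m : ArtinTitsMonoid Mmat) :
    cs.length (atProj cs m) ≤ Multiplicative.toAdd (atLen Mmat m) := by
  induction m using Con.induction_on with
  | H x =>
    have h1 : (↑x : ArtinTitsMonoid Mmat) = Con.mk' _ x := rfl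
    rw [h1, atProj_mk, atLen_mk]
    exact cs.length_wordProd_le x.toList

theorem atProj_prodMap {Mmat : CoxeterMatrix S} (cs : CoxeterSystem Mmat W) (ω : List S) :
    atProj cs ((ω.map (atGen Mmat)).prod) = cs.wordProd ω := by
  induction ω with
  | nil => simp
  | cons a l ih =>
    rw [List.map_cons, List.prod_cons, map_mul, ih, cs.wordProd_cons]
    congr 1

theorem atLen_prodMap (Mmat : CoxeterMatrix S) (ω : List S) :
    atLen Mmat ((ω.map (atGen Mmat)).prod) = Multiplicative.ofAdd ω.length := by
  induction ω with
  | nil => rfl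
  | cons a l ih =>
    rw [List.map_cons, List.prod_cons, map_mul, ih]
    show Multiplicative.ofAdd (FreeMonoid.of a).length * _ = _
    rw [← ofAdd_add, FreeMonoid.length_of, List.length_cons, add_comm]

end Aux

/-- **Lemma 3.1(ii).** For `u, w` in the Coxeter group `W`, the element `σ(u)`
left-divides `σ(w)` in the Artin–Tits monoid `M` if and only if `u ≤ w` in the right
weak order; and `σ(u)` right-divides `σ(w)` if and only if `u` is a suffix of `w`. -/
theorem artinTits_section_dvd_iff {S : Type*} [Fintype S]
    (Mmat : CoxeterMatrix S) {W : Type*} [Group W] (cs : CoxeterSystem Mmat W)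
    (σ : W → ArtinTitsMonoid Mmat)
    (hσ : ∀ (w : W) (ω : List S), cs.IsReduced ω → cs.wordProd ω = w →
      σ w = (ω.map (atGen Mmat)).prod)
    (u w : W) :
    (σ u ∣ σ w ↔ WeakLE cs u w) ∧ (MonRightDvd (σ u) (σ w) ↔ IsSuffixOf cs u w) :=   by
  obtain ⟨ωu, hur, huw⟩ := cs.exists_reduced_word' u
  obtain ⟨ωw, hwr, hww⟩ := cs.exists_reduced_word' w
  have hσu : σ u = (ωu.map (atGen Mmat)).prod := hσ u ωu hur huw.symm
  have hσw : σ w = (ωw.map (atGen Mmat)).prod := hσ w ωw hwr hww.symm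
  have hPu : atProj cs (σ u) = u := by rw [hσu, atProj_prodMap, ← huw]
  have hPw : atProj cs (σ w) = w := by rw [hσw, atProj_prodMap, ← hww]
  have hLu : atLen Mmat (σ u) = Multiplicative.ofAdd (cs.length u) := by
    rw [hσu, atLen_prodMap, ← hur, ← huw]
  have hLw : atLen Mmat (σ w) = Multiplicative.ofAdd (cs.length w) := by
    rw [hσw, atLen_prodMap, ← hwr, ← hww]
  constructor
  · constructor
    · rintro ⟨m, hm⟩
      refine ⟨atProj cs m, ?_, ?_⟩
      · rw [← hPu, ← hPw, hm, map_mul]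
      · have h1 : cs.length w = cs.length u + Multiplicative.toAdd (atLen Mmat m) := by
          have := congrArg (atLen Mmat) hm
          rw [map_mul, hLw, hLu] at this
          simpa [toAdd_mul] using congrArg Multiplicative.toAdd this
        have h2 := length_atProj_le cs m
        have h3 : cs.length w ≤ cs.length u + cs.length (atProj cs m) := by
          have : w = u * atProj cs m := by rw [← hPu, ← hPw, hm, map_mul]
          rw [this]; exact cs.length_mul_le u (atProj cs m)
        omega
    · rintro ⟨v, hwv, hlen⟩
      obtain ⟨ωv, hvr, hvw⟩ := cs.exists_reduced_word' v
      have hred : cs.IsReduced (ωu ++ ωv) := by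
        unfold CoxeterSystem.IsReduced
        rw [cs.wordProd_append, ← huw, ← hvw, ← hwv, hlen, List.length_append,
          ← hur, ← hvr, ← huw, ← hvw]
      have : σ w = ((ωu ++ ωv).map (atGen Mmat)).prod :=
        hσ w (ωu ++ ωv) hred (by rw [cs.wordProd_append, ← huw, ← hvw, hwv])
      refine ⟨(ωv.map (atGen Mmat)).prod, ?_⟩
      rw [this, hσu, List.map_append, List.prod_append]
  · constructor
    · rintro ⟨m, hm⟩
      refine ⟨atProj cs m, ?_, ?_⟩
      · rw [← hPu, ← hPw, hm, map_mul]
      · have h1 : cs.length w = Multiplicative.toAdd (atLen Mmat m) + cs.length u := by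
          have := congrArg (atLen Mmat) hm
          rw [map_mul, hLw, hLu] at this
          simpa [toAdd_mul] using congrArg Multiplicative.toAdd this
        have h2 := length_atProj_le cs m
        have h3 : cs.length w ≤ cs.length (atProj cs m) + cs.length u := by
          have : w = atProj cs m * u := by rw [← hPu, ← hPw, hm, map_mul]
          rw [this]; exact cs.length_mul_le (atProj cs m) u
        omega
    · rintro ⟨v, hwv, hlen⟩
      obtain ⟨ωv, hvr, hvw⟩ := cs.exists_reduced_word' v
      have hred : cs.IsReduced (ωv ++ ωu) := by
        unfold CoxeterSystem.IsReduced
        rw [cs.wordProd_append, ← huw, ← hvw, ← hwv, hlen, List.length_append,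
          ← hur, ← hvr, ← huw, ← hvw]
      have : σ w = ((ωv ++ ωu).map (atGen Mmat)).prod :=
        hσ w (ωv ++ ωu) hred (by rw [cs.wordProd_append, ← huw, ← hvw, hwv])
      refine ⟨(ωv.map (atGen Mmat)).prod, ?_⟩
      rw [this, hσu, List.map_append, List.prod_append]
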